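/- Let S = {s, u_1, ..., u_{k-1}} and T = {t, u_1, ..., u_{k-1}} be adjacent bases of a matroid, u ∈ S ∩ T with t ∈ N(S-u), and let a ∈ A_u := (N(S-u) - t) \ N(T-u). Then the basis S - u + a is at distance at least 2 (in the basis-exchange metric) from every basis of the form T - v + b with v ∈ T, b ∈ N(T - v), except possibly T - u + s, T - t + s, and T - t + a. -/
import Mathlib


open scoped Classical BigOperators

/-- A matroid given by its set of bases: a nonempty antichain of finite
subsets satisfying the basis exchange property. -/
structure FinMatroid (α : Type*) [DecidableEq α] where
  IsBase : Finset α → Prop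
  nonempty : ∃ B, IsBase B
  antichain : ∀ B₁ B₂, IsBase B₁ → IsBase B₂ → B₁ ⊆ B₂ → B₁ = B₂
  exchange : ∀ B₁ B₂, IsBase B₁ → IsBase B₂ → ∀ b₁ ∈ B₁ \ B₂,
      ∃ b₂ ∈ B₂ \ B₁, IsBase (insert b₂ (B₁.erase b₁))

namespace FinMatroid

variable {α : Type*} [Fintype α] [DecidableEq α] (M : FinMatroid α)

/-- `N(B - u)`: the elements `x` such that `B - u + x` is a basis. -/
noncomputable def exNbr (B : Finset α) (u : α) : Finset α :=
  Finset.univ.filter (fun x => M.IsBase (insert x (B.erase u)))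

/-- The bases containing `B - u`, i.e. the possible results of an up-step after
dropping `u` from `B`. -/
noncomputable def up (B : Finset α) (u : α) : Finset (Finset α) :=
  Finset.univ.filter (fun B' => M.IsBase B' ∧ B.erase u ⊆ B')

/-- The transition probability of the basis exchange (down-up) walk:
drop a uniform element `u` of the current basis `S`, then move to a uniform
basis containing `S - u`. -/
noncomputable def step (S B' : Finset α) : ℝ :=
  ∑ u ∈ S, (1 / (S.card : ℝ)) * (if B' ∈ M.up S u then 1 / ((M.up S u).card : ℝ) else 0)

/-- The metric induced by the basis exchange walk on bases: the graph distance
in the basis exchange graph, which equals `#(S \ T)`. -/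
noncomputable def dist (S T : Finset α) : ℝ := ((S \ T).card : ℝ)

/-- `π` is a coupling of the distributions `μ` and `ν` on `Finset α`. -/
def IsCoupling (μ ν : Finset α → ℝ) (π : Finset α → Finset α → ℝ) : Prop :=
  (∀ x y, 0 ≤ π x y) ∧ (∀ x, ∑ y : Finset α, π x y = μ x) ∧
    (∀ y, ∑ x : Finset α, π x y = ν y)

/-- The expected distance under a coupling `π`. -/
noncomputable def cost (π : Finset α → Finset α → ℝ) : ℝ :=
  ∑ x : Finset α, ∑ y : Finset α, π x y * dist x y

/-- Wasserstein distance between two distributions on bases. -/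
noncomputable def W (μ ν : Finset α → ℝ) : ℝ :=
  sInf {c | ∃ π, IsCoupling μ ν π ∧ cost π = c}

/-- The Ollivier–Ricci curvature of the basis exchange walk: the largest `κ`
such that `W(P(S,·), P(T,·)) ≤ (1 - κ) · d(S,T)` for all bases `S`, `T`. -/
noncomputable def curvature : ℝ :=
  sSup {κ : ℝ | ∀ S T, M.IsBase S → M.IsBase T →
    W (M.step S) (M.step T) ≤ (1 - κ) * dist S T}

end FinMatroid

/-- Proposition: for adjacent bases `S = U + u + s`, `T = U + u + t`, if
`t ∈ N(S - u)` and `a ∈ A_u = (N(S-u) - t) \ N(T-u)`, then the basis `S - u + a`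
is at distance at least 2 from every neighbor `T - v + b` of `T`, except
possibly `T - u + s`, `T - t + s` and `T - t + a`. -/
theorem stmt12 {α : Type*} [Fintype α] [DecidableEq α] (M : FinMatroid α)
    (U : Finset α) (s t u : α)
    (hs : s ∉ U) (ht : t ∉ U) (hu : u ∉ U)
    (hst : s ≠ t) (hsu : s ≠ u) (htu : t ≠ u)
    (S T : Finset α) (hSdef : S = insert s (insert u U)) (hTdef : T = insert t (insert u U))
    (hS : M.IsBase S) (hT : M.IsBase T)
    (htN : t ∈ M.exNbr S u)
    (a : α) (ha : a ∈ ((M.exNbr S u).erase t) \ (M.exNbr T u))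
    (v : α) (hv : v ∈ T) (b : α) (hb : b ∈ M.exNbr T v) :
    insert b (T.erase v) ≠ insert s (T.erase u) →
    insert b (T.erase v) ≠ insert s (T.erase t) →
    insert b (T.erase v) ≠ insert a (T.erase t) →
    2 ≤ ((insert a (S.erase u)) \ (insert b (T.erase v))).card := by
  intro h1 h2 h3
  classical
  simp only [Finset.mem_sdiff, Finset.mem_erase] at ha
  obtain ⟨⟨hat, haS⟩, haT⟩ := ha
  simp only [FinMatroid.exNbr, Finset.mem_filter, Finset.mem_univ, true_and] at haS haT hb
  have huS : u ∈ S := by simp [hSdef]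
  have huT : u ∈ T := by simp [hTdef]
  have haSu : a ∉ S.erase u := by
    intro hmem
    have h0 : insert a (S.erase u) = S.erase u := Finset.insert_eq_self.mpr hmem
    rw [h0] at haS
    have heq := M.antichain _ _ haS hS (Finset.erase_subset u S)
    have : u ∈ S.erase u := by rw [heq]; exact huS
    simp at this
  have hau : a ≠ u := by
    intro h; subst h
    exact haT (by rwa [Finset.insert_erase huT])
  have has : a ≠ s := by
    intro h; subst h
    exact haSu (by simp [hSdef, hsu])
  have haU : a ∉ U := by
    intro h
    exact haSu (by simp [hSdef, h, hau])
  have haTmem : a ∉ T := by simp [hTdef, hat, hau, haU]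
  have hsT : s ∉ T := by simp [hTdef, hst, hsu, hs]
  have haX : a ∈ insert a (S.erase u) := Finset.mem_insert_self _ _
  have hsX : s ∈ insert a (S.erase u) := by simp [hSdef, hsu]
  have key1 : ∀ x, x ≠ b → x ∉ T → x ∉ insert b (T.erase v) := by
    intro x hxb hxT hx
    rcases Finset.mem_insert.mp hx with h | h
    · exact hxb h
    · exact hxT (Finset.mem_of_mem_erase h)
  have key2 : v ≠ b → v ∉ insert b (T.erase v) := by
    intro hvb hx
    rcases Finset.mem_insert.mp hx with h | h
    · exact hvb h
    · exact (Finset.mem_erase.mp h).1 rfl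
  refine Finset.one_lt_card.mpr ?_
  have hvT := hv
  rw [hTdef] at hvT
  simp only [Finset.mem_insert] at hvT
  rcases hvT with hvt | hvu | hvU
  · -- v = t
    subst hvt
    by_cases hbs : b = s
    · exact absurd (by rw [hbs]) h2
    by_cases hba : b = a
    · exact absurd (by rw [hba]) h3
    refine ⟨a, Finset.mem_sdiff.mpr ⟨haX, key1 a (fun h => hba h.symm) haTmem⟩,
      s, Finset.mem_sdiff.mpr ⟨hsX, key1 s (fun h => hbs h.symm) hsT⟩, has⟩
  · -- v = u
    subst hvu
    by_cases hbs : b = s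
    · exact absurd (by rw [hbs]) h1
    by_cases hba : b = a
    · subst hba; exact absurd hb haT
    refine ⟨a, Finset.mem_sdiff.mpr ⟨haX, key1 a (fun h => hba h.symm) haTmem⟩,
      s, Finset.mem_sdiff.mpr ⟨hsX, key1 s (fun h => hbs h.symm) hsT⟩, has⟩
  · -- v ∈ U
    have hvu : v ≠ u := fun h => hu (h ▸ hvU)
    have hvs : v ≠ s := fun h => hs (h ▸ hvU)
    have hva : v ≠ a := fun h => haU (h ▸ hvU)
    have hvX : v ∈ insert a (S.erase u) := by simp [hSdef, hvU, hvu]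
    by_cases hba : b = a
    · refine ⟨s, Finset.mem_sdiff.mpr ⟨hsX, key1 s (fun h => has (hba ▸ h).symm) hsT⟩,
        v, Finset.mem_sdiff.mpr ⟨hvX, key2 (fun h => hva (hba ▸ h))⟩, Ne.symm hvs⟩
    · by_cases hbs : b = s
      · refine ⟨a, Finset.mem_sdiff.mpr ⟨haX, key1 a (fun h => hba h.symm) haTmem⟩,
          v, Finset.mem_sdiff.mpr ⟨hvX, key2 (fun h => hvs (hbs ▸ h))⟩, Ne.symm hva⟩
      · refine ⟨s, Finset.mem_sdiff.mpr ⟨hsX, key1 s (fun h => hbs h.symm) hsT⟩,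
          a, Finset.mem_sdiff.mpr ⟨haX, key1 a (fun h => hba h.symm) haTmem⟩, Ne.symm has⟩
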